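/- Let y_1,…,y_m ≥ 0 be real numbers, c* > 0, set x_i = min{y_i, c*} and x̄ = (1/m)Σ_i x_i. Suppose x̄ ≥ α c* for some 0 < α ≤ 1. Then for any 0 < δ < α, the number of indices i with x_i ≥ (δ/(1-α+δ))·c* is at least ⌈m(α - δ)⌉. -/

import Mathlib

open Finset

theorem stmt10 {m : ℕ} (hm : 0 < m) (y : Fin m → ℝ) (hy : ∀ i, 0 ≤ y i)
    (c : ℝ) (hc : 0 < c) (α δ : ℝ) (hα0 : 0 < α) (hα1 : α ≤ 1)
    (hδ0 : 0 < δ) (hδα : δ < α)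
    (havg : α * c ≤ (1 / (m : ℝ)) * ∑ i, min (y i) c) :
    ⌈(m : ℝ) * (α - δ)⌉₊ ≤
      (Finset.univ.filter (fun i => (δ / (1 - α + δ)) * c ≤ min (y i) c)).card := by
  have hmR : (0:ℝ) < (m:ℝ) := by exact_mod_cast hm
  set S := Finset.univ.filter (fun i => (δ / (1 - α + δ)) * c ≤ min (y i) c) with hS
  set k := S.card with hk
  have ht : 0 < 1 - α + δ := by linarith
  have hkm : k ≤ m := by
    have := Finset.card_filter_le Finset.univ
      (fun i => (δ / (1 - α + δ)) * c ≤ min (y i) c)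
    simpa [hk, hS] using this
  rcases eq_or_lt_of_le hkm with heq | hlt
  · rw [heq]
    refine Nat.ceil_le.mpr ?_
    nlinarith
  · -- strict sum bound
    have hsum : ∑ i, min (y i) c = ∑ i ∈ S, min (y i) c + ∑ i ∈ Sᶜ, min (y i) c :=
      (Finset.sum_add_sum_compl S _).symm
    have h1 : ∑ i ∈ S, min (y i) c ≤ (k:ℝ) * c := by
      have := Finset.sum_le_card_nsmul S (fun i => min (y i) c) c
        (fun i _ => min_le_right _ _)
      simpa [hk, nsmul_eq_mul] using this
    have hcompl_card : Sᶜ.card = m - k := by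
      simp [Finset.card_compl, hk]
    have hne : Sᶜ.Nonempty := by
      rw [← Finset.card_pos, hcompl_card]
      omega
    have h2 : ∑ i ∈ Sᶜ, min (y i) c < (Sᶜ.card : ℝ) * ((δ / (1 - α + δ)) * c) := by
      have := Finset.sum_lt_sum_of_nonempty hne (f := fun i => min (y i) c)
        (g := fun _ => (δ / (1 - α + δ)) * c) ?_
      · simpa [Finset.sum_const, nsmul_eq_mul] using this
      · intro i hi
        rw [Finset.mem_compl, hS, Finset.mem_filter] at hi
        push_neg at hi
        exact hi (Finset.mem_univ i)
    have hmk : ((Sᶜ.card : ℝ)) = (m:ℝ) - k := by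
      rw [hcompl_card]
      have : (k:ℝ) ≤ m := by exact_mod_cast hkm
      push_cast [Nat.cast_sub hkm]
      ring
    have htotal : (m:ℝ) * (α * c) ≤ ∑ i, min (y i) c := by
      have h := mul_le_mul_of_nonneg_left havg (le_of_lt hmR)
      have heq2 : (m:ℝ) * (1 / (m:ℝ) * ∑ i, min (y i) c) = ∑ i, min (y i) c := by
        field_simp
      rw [heq2] at h
      linarith
    have hkey : (m:ℝ) * α * c < (k:ℝ) * c + ((m:ℝ) - k) * ((δ / (1 - α + δ)) * c) := by
      rw [hmk] at h2
      nlinarith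
    -- divide by c and clear denominator
    have hB : δ / (1 - α + δ) * (1 - α + δ) = δ := div_mul_cancel₀ δ (ne_of_gt ht)
    refine Nat.ceil_le.mpr ?_
    by_contra hcon
    push_neg at hcon
    have hkey2 : (m:ℝ) * α * (1 - α + δ) < (k:ℝ) * (1 - α + δ) + ((m:ℝ) - k) * δ := by
      have := (mul_lt_mul_iff_of_pos_right hc).mp (by
        have : ((k:ℝ) * c + ((m:ℝ) - k) * ((δ / (1 - α + δ)) * c))
            = ((k:ℝ) + ((m:ℝ) - k) * (δ / (1 - α + δ))) * c := by ring
        rw [this] at hkey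
        exact hkey)
      nlinarith [hB]
    nlinarith [hkey2, hB, mul_nonneg (sub_nonneg.mpr hα1) (sub_nonneg.mpr (le_of_lt hcon))]
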